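/- There exist 3^d dyadic lattices D^1, …, D^{3^d} in ℝ^d such that for every cube Q there is some index j(Q) ∈ {1,…,3^d} and a cube P ∈ D^{j(Q)} with Q ⊆ P and |P| ≤ 3^d |Q|. -/

import Mathlib

open MeasureTheory ENNReal NNReal Set

noncomputable section

/-- A half-open axis-parallel cube in `ℝ^d`, given by its corner and (positive) sidelength. -/
structure Cube (d : ℕ) where
  corner : Fin d → ℝ
  side : ℝ
  side_pos : 0 < side

namespace Cube

variable {d : ℕ}

/-- The set of points of the cube: `[x_1, x_1+l) × ⋯ × [x_d, x_d+l)`. -/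
def toSet (Q : Cube d) : Set (Fin d → ℝ) :=
  {y | ∀ i, Q.corner i ≤ y i ∧ y i < Q.corner i + Q.side}

/-- The translate `Q + l(Q) m` of a cube. -/
def translate (Q : Cube d) (m : Fin d → ℤ) : Cube d :=
  ⟨fun i => Q.corner i + Q.side * (m i : ℝ), Q.side, Q.side_pos⟩

/-- The corner child `x(Q) + (1/2)(Q - x(Q))` of a cube. -/
def cornerChild (Q : Cube d) : Cube d :=
  ⟨Q.corner, Q.side / 2, by have := Q.side_pos; linarith⟩

/-- The threefold expansion `x(Q) + 3(Q - x(Q))` of a cube from its corner. -/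
def expand3 (Q : Cube d) : Cube d :=
  ⟨Q.corner, 3 * Q.side, by have := Q.side_pos; linarith⟩

/-- The dilate `D_c Q`: cube with the same center as `Q` and sidelength `c·l(Q)`. -/
def dilate (Q : Cube d) (c : ℝ) (hc : 0 < c) : Cube d :=
  ⟨fun i => Q.corner i + Q.side / 2 - c * Q.side / 2, c * Q.side, by
    have := Q.side_pos; positivity⟩

end Cube

/-- A dyadic lattice in `ℝ^d`: a family of generations of cubes, each generation formed by
all translates of one of its cubes, and each generation containing a cube whose corner child
belongs to the next generation. -/
structure DyadicLattice (d : ℕ) where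
  gen : ℤ → Set (Cube d)
  gen_translates : ∀ k, ∃ Q ∈ gen k, gen k = {R | ∃ m : Fin d → ℤ, R = Q.translate m}
  cornerChild_mem : ∀ k, ∃ Q ∈ gen k, Q.cornerChild ∈ gen (k + 1)

/-- The collection of all cubes of a dyadic lattice. -/
def DyadicLattice.cubes {d : ℕ} (D : DyadicLattice d) : Set (Cube d) := ⋃ k, D.gen k

/-- The quadrant of a dyadic lattice containing `x`: the union of all cubes of the lattice
containing `x`. -/
def DyadicLattice.quadrant {d : ℕ} (D : DyadicLattice d) (x : Fin d → ℝ) :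
    Set (Fin d → ℝ) :=
  ⋃ Q ∈ {Q : Cube d | Q ∈ D.cubes ∧ x ∈ Q.toSet}, Q.toSet

/-- A weight: a locally integrable, a.e. positive (and finite) function. -/
def IsWeight {d : ℕ} (w : (Fin d → ℝ) → ℝ) : Prop :=
  LocallyIntegrable w volume ∧ ∀ᵐ x ∂(volume : Measure (Fin d → ℝ)), 0 < w x

/-- The measure `w dx` associated to a weight. -/
def wMeasure {d : ℕ} (w : (Fin d → ℝ) → ℝ) : Measure (Fin d → ℝ) :=
  volume.withDensity fun x => ENNReal.ofReal (w x)

/-- `w(E) = ∫_E w dx`. -/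
def wInt {d : ℕ} (w : (Fin d → ℝ) → ℝ) (E : Set (Fin d → ℝ)) : ℝ≥0∞ :=
  ∫⁻ x in E, ENNReal.ofReal (w x)

/-- The `L^q` norm (with `q = ∞` allowed) of an `ℝ≥0∞`-valued function. -/
def eLpNormENN {X : Type*} [MeasurableSpace X] (g : X → ℝ≥0∞) (q : ℝ≥0∞)
    (μ : Measure X) : ℝ≥0∞ :=
  if q = ∞ then essSup g μ
  else (∫⁻ x, g x ^ q.toReal ∂μ) ^ (1 / q.toReal)

/-- The weak `L^q` quasinorm (with `q = ∞` allowed, interpreted as the `L^∞` norm) of an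
`ℝ≥0∞`-valued function: `sup_{t>0} t · μ{g > t}^{1/q}`. -/
def wnormENN {X : Type*} [MeasurableSpace X] (g : X → ℝ≥0∞) (q : ℝ≥0∞)
    (μ : Measure X) : ℝ≥0∞ :=
  if q = ∞ then essSup g μ
  else ⨆ t : ℝ≥0, (t : ℝ≥0∞) * μ {x | (t : ℝ≥0∞) < g x} ^ (1 / q.toReal)

/-- The weighted dyadic fractional maximal operator
`M^D_{α,w} f(x) = sup_{Q ∈ D, x ∈ Q} w(Q)^{α/d-1} ∫_Q |f| w`. -/
def MwDyadic {d : ℕ} (D : DyadicLattice d) (α : ℝ) (w f : (Fin d → ℝ) → ℝ)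
    (x : Fin d → ℝ) : ℝ≥0∞ :=
  ⨆ (Q : Cube d) (_ : Q ∈ D.cubes) (_ : x ∈ Q.toSet),
    wInt w Q.toSet ^ (α / (d : ℝ) - 1) *
      ∫⁻ y in Q.toSet, (‖f y‖₊ : ℝ≥0∞) * ENNReal.ofReal (w y)

/-- The dyadic fractional maximal operator `M^D_α f(x) = sup_{Q ∈ D, x ∈ Q} |Q|^{α/d} ⨍_Q |f|`. -/
def MfracDyadic {d : ℕ} (D : DyadicLattice d) (α : ℝ) (f : (Fin d → ℝ) → ℝ)
    (x : Fin d → ℝ) : ℝ≥0∞ :=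
  ⨆ (Q : Cube d) (_ : Q ∈ D.cubes) (_ : x ∈ Q.toSet),
    volume Q.toSet ^ (α / (d : ℝ) - 1) * ∫⁻ y in Q.toSet, (‖f y‖₊ : ℝ≥0∞)

/-- The fractional maximal operator `M_α f(x) = sup_{Q ∋ x} |Q|^{α/d} ⨍_Q |f|`,
supremum over all cubes containing `x`. -/
def Mfrac {d : ℕ} (α : ℝ) (f : (Fin d → ℝ) → ℝ) (x : Fin d → ℝ) : ℝ≥0∞ :=
  ⨆ (Q : Cube d) (_ : x ∈ Q.toSet),
    volume Q.toSet ^ (α / (d : ℝ) - 1) * ∫⁻ y in Q.toSet, (‖f y‖₊ : ℝ≥0∞)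

/-- The weighted fractional maximal operator
`M_{α,w} f(x) = sup_{Q ∋ x} w(Q)^{α/d-1} ∫_Q |f| w`, supremum over all cubes containing `x`. -/
def Mwfrac {d : ℕ} (α : ℝ) (w f : (Fin d → ℝ) → ℝ) (x : Fin d → ℝ) : ℝ≥0∞ :=
  ⨆ (Q : Cube d) (_ : x ∈ Q.toSet),
    wInt w Q.toSet ^ (α / (d : ℝ) - 1) *
      ∫⁻ y in Q.toSet, (‖f y‖₊ : ℝ≥0∞) * ENNReal.ofReal (w y)

/-- An `η`-sparse collection of cubes: each cube `Q` has a measurable subset `G(Q)` with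
`|G(Q)| ≥ η|Q|`, the sets `G(Q)` being pairwise disjoint. -/
def IsSparseCubes {d : ℕ} (η : ℝ) (S : Set (Cube d)) : Prop :=
  ∃ G : Cube d → Set (Fin d → ℝ),
    (∀ Q ∈ S, G Q ⊆ Q.toSet ∧ MeasurableSet (G Q) ∧
      ENNReal.ofReal η * volume Q.toSet ≤ volume (G Q)) ∧
    S.PairwiseDisjoint G

/-- The sparse operator `A_S^α f(x) = Σ_{Q ∈ S} χ_Q(x) |Q|^{α/d} ⨍_Q |f|`. -/
def sparseOp {d : ℕ} (α : ℝ) (S : Set (Cube d)) (f : (Fin d → ℝ) → ℝ)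
    (x : Fin d → ℝ) : ℝ≥0∞ :=
  ∑' Q : S, (Q : Cube d).toSet.indicator
    (fun _ => volume (Q : Cube d).toSet ^ (α / (d : ℝ) - 1) *
      ∫⁻ y in (Q : Cube d).toSet, (‖f y‖₊ : ℝ≥0∞)) x

/-- The `A_{p,q}^α` constant of a pair of weights:
`[v,w] = sup_Q |Q|^{α/d-1} (∫_Q v^{-p'/p})^{1/p'} (∫_Q w)^{1/q}` where `p' = p/(p-1)`. -/
def apqConst {d : ℕ} (p q α : ℝ) (v w : (Fin d → ℝ) → ℝ) : ℝ≥0∞ :=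
  ⨆ Q : Cube d,
    volume Q.toSet ^ (α / (d : ℝ) - 1) *
      (∫⁻ x in Q.toSet, ENNReal.ofReal (v x ^ (-(p / (p - 1)) / p))) ^ ((p - 1) / p) *
      (∫⁻ x in Q.toSet, ENNReal.ofReal (w x)) ^ (1 / q)

/-- The Muckenhoupt `A_∞` condition: `sup_Q exp(⨍_Q log w⁻¹) · ⨍_Q w < ∞`. -/
def IsAinfty {d : ℕ} (w : (Fin d → ℝ) → ℝ) : Prop :=
  ∃ C : ℝ, ∀ Q : Cube d,
    Real.exp (⨍ x in Q.toSet, Real.log (w x)⁻¹ ∂volume) *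
      (⨍ x in Q.toSet, w x ∂volume) ≤ C

/-- The Euclidean norm of a point of `ℝ^d`. -/
def euclNorm {d : ℕ} (x : Fin d → ℝ) : ℝ := Real.sqrt (∑ i, x i ^ 2)

/-- The auxiliary maximal operator `M_{T,λ}` controlling oscillations of truncations of `T`:
`M_{T,λ} f(x) = sup_{Q ∋ x} ess sup_{x',x'' ∈ Q} |T(fχ_{ℝ^d∖Q*})(x') − T(fχ_{ℝ^d∖Q*})(x'')|`. -/
def MT {d : ℕ} (T : ((Fin d → ℝ) → ℝ) → (Fin d → ℝ) → ℝ) (lam : ℝ) (hlam : 0 < lam)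
    (f : (Fin d → ℝ) → ℝ) (x : Fin d → ℝ) : ℝ≥0∞ :=
  ⨆ (Q : Cube d) (_ : x ∈ Q.toSet),
    essSup
      (fun z : (Fin d → ℝ) × (Fin d → ℝ) =>
        (‖T (((Q.dilate lam hlam).toSet)ᶜ.indicator f) z.1 -
            T (((Q.dilate lam hlam).toSet)ᶜ.indicator f) z.2‖₊ : ℝ≥0∞))
      ((volume.restrict Q.toSet).prod (volume.restrict Q.toSet))

end

noncomputable section ThreeLattice

namespace ThreeLattice

variable {d : ℕ}

lemma cube_ext {Q R : Cube d} (hc : Q.corner = R.corner) (hs : Q.side = R.side) : Q = R := by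
  cases Q; cases R; simp_all

lemma translate_zero (Q : Cube d) : Q.translate 0 = Q := by
  apply cube_ext
  · funext i; simp [Cube.translate]
  · rfl

/-- sign `(-1)^k` as an integer. -/
def sgn (k : ℤ) : ℤ := if Even k then 1 else -1

lemma sgn_succ (k : ℤ) : sgn (k + 1) = - sgn k := by
  simp only [sgn, Int.even_add_one]
  by_cases h : Even k <;> simp [h]

/-- Base cube of generation `k` of the lattice with shift `v`. -/
def baseCube (v : Fin d → Fin 3) (k : ℤ) : Cube d :=
  ⟨fun i => (2 : ℝ) ^ (-k) * (sgn k : ℝ) * (v i : ℝ) / 3, (2 : ℝ) ^ (-k), by positivity⟩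

/-- The shifted dyadic lattice with shift `v`. -/
def lat (v : Fin d → Fin 3) : DyadicLattice d where
  gen k := {R | ∃ m : Fin d → ℤ, R = (baseCube v k).translate m}
  gen_translates k := ⟨baseCube v k, ⟨0, (translate_zero _).symm⟩, rfl⟩
  cornerChild_mem k := by
    refine ⟨baseCube v k, ⟨0, (translate_zero _).symm⟩,
      fun i => sgn k * (v i : ℤ), ?_⟩
    apply cube_ext
    · funext i
      have h1 : ((sgn (k + 1) : ℤ) : ℝ) = -((sgn k : ℤ) : ℝ) := by
        rw [sgn_succ]; push_cast; ring
      have h2 : (2 : ℝ) ^ (-(k + 1)) = (2 : ℝ) ^ (-k) / 2 := by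
        rw [show -(k+1) = -k + (-1) by ring, zpow_add₀ (by norm_num : (2:ℝ) ≠ 0)]
        norm_num
        ring
      simp only [Cube.cornerChild, Cube.translate, baseCube, h2, h1]
      push_cast
      ring
    · show (2 : ℝ) ^ (-k) / 2 = (2 : ℝ) ^ (-(k + 1))
      rw [show -(k+1) = -k + (-1) by ring, zpow_add₀ (by norm_num : (2:ℝ) ≠ 0)]
      norm_num
      ring

lemma volume_toSet (Q : Cube d) :
    volume Q.toSet = ENNReal.ofReal Q.side ^ d := by
  have : Q.toSet = Set.pi Set.univ (fun i => Set.Ico (Q.corner i) (Q.corner i + Q.side)) := by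
    ext y; simp [Cube.toSet, Set.mem_pi, Set.mem_Ico]
  rw [this, volume_pi_pi]
  simp [Real.volume_Ico]

/-- Key one-dimensional fact: one of the three shifted grids at scale `s` contains an
interval `[p, p+s)` covering `[a, a+l)`, provided `l ≤ 2s/3`. -/
lemma exists_good (s l a : ℝ) (hs : 0 < s) (hl : 0 < l) (hls : l ≤ 2 * s / 3)
    (σ : ℤ) (hσ : σ = 1 ∨ σ = -1) :
    ∃ (t : Fin 3) (z : ℤ),
      s * (σ : ℝ) * (t : ℝ) / 3 + s * (z : ℝ) ≤ a ∧
      a + l ≤ s * (σ : ℝ) * (t : ℝ) / 3 + s * (z : ℝ) + s := by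
  by_contra hcon
  push_neg at hcon
  -- for each t, take the floor choice of z
  have key : ∀ t : Fin 3, ∃ n : ℤ, (n : ℤ) % 3 = (σ * (t : ℤ)) % 3 ∧
      a < s / 3 * (n : ℝ) ∧ s / 3 * (n : ℝ) < a + l := by
    intro t
    set z : ℤ := ⌊a / s - (σ : ℝ) * (t : ℝ) / 3⌋ with hz
    have h1 : (z : ℝ) ≤ a / s - (σ : ℝ) * (t : ℝ) / 3 := Int.floor_le _
    have h2 : a / s - (σ : ℝ) * (t : ℝ) / 3 < (z : ℝ) + 1 := Int.lt_floor_add_one _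
    have hp : s * (σ : ℝ) * (t : ℝ) / 3 + s * (z : ℝ) ≤ a := by
      have := mul_le_mul_of_nonneg_left h1 hs.le
      rw [mul_sub] at this
      rw [mul_div_assoc' s] at this
      have hsa : s * (a / s) = a := by field_simp
      nlinarith [this]
    have hbad := hcon t z hp
    refine ⟨σ * (t : ℤ) + 3 * (z + 1), by omega, ?_, ?_⟩
    · -- a < s/3 * n, i.e. a < p + s
      have : a < s * (σ : ℝ) * (t : ℝ) / 3 + s * (z : ℝ) + s := by
        have := mul_lt_mul_of_pos_left h2 hs
        rw [mul_sub] at this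
        have hsa : s * (a / s) = a := by field_simp
        nlinarith [this]
      calc a < s * (σ : ℝ) * (t : ℝ) / 3 + s * (z : ℝ) + s := this
        _ = s / 3 * ((σ * (t : ℤ) + 3 * (z + 1) : ℤ) : ℝ) := by push_cast; ring
    · calc s / 3 * ((σ * (t : ℤ) + 3 * (z + 1) : ℤ) : ℝ)
          = s * (σ : ℝ) * (t : ℝ) / 3 + s * (z : ℝ) + s := by push_cast; ring
        _ < a + l := hbad
  obtain ⟨n0, hm0, h0l, h0r⟩ := key 0
  obtain ⟨n1, hm1, h1l, h1r⟩ := key 1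
  obtain ⟨n2, hm2, h2l, h2r⟩ := key 2
  have hs3 : 0 < s / 3 := by linarith
  -- pairwise differences are at most 1 in absolute value
  have diff : ∀ p q : ℤ, a < s / 3 * (p : ℝ) → s / 3 * (p : ℝ) < a + l →
      a < s / 3 * (q : ℝ) → s / 3 * (q : ℝ) < a + l → p - q ≤ 1 := by
    intro p q hpl hpr hql hqr
    by_contra h
    push_neg at h
    have h2 : (2 : ℝ) ≤ (p : ℝ) - (q : ℝ) := by exact_mod_cast (by omega : (2:ℤ) ≤ p - q)
    have : s / 3 * 2 ≤ s / 3 * ((p : ℝ) - (q : ℝ)) := by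
      apply mul_le_mul_of_nonneg_left h2 hs3.le
    nlinarith
  have d01 := diff n0 n1 h0l h0r h1l h1r
  have d10 := diff n1 n0 h1l h1r h0l h0r
  have d02 := diff n0 n2 h0l h0r h2l h2r
  have d20 := diff n2 n0 h2l h2r h0l h0r
  have d12 := diff n1 n2 h1l h1r h2l h2r
  have d21 := diff n2 n1 h2l h2r h1l h1r
  simp only [Fin.isValue, Fin.val_zero, Fin.val_one, Fin.val_two] at hm0 hm1 hm2
  omega

end ThreeLattice

end ThreeLattice

/-- every cube is well approximated by a cube from one of `3^d` dyadic lattices. -/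
theorem three_lattice_covering (d : ℕ) :
    ∃ Ds : Fin (3 ^ d) → DyadicLattice d,
      ∀ Q : Cube d, ∃ (j : Fin (3 ^ d)) (P : Cube d), P ∈ (Ds j).cubes ∧
        Q.toSet ⊆ P.toSet ∧ volume P.toSet ≤ (3 : ℝ≥0∞) ^ d * volume Q.toSet := by
  classical
  refine ⟨fun j => ThreeLattice.lat (finFunctionFinEquiv.symm j), fun Q => ?_⟩
  set l := Q.side with hl'
  have hl : 0 < l := Q.side_pos
  obtain ⟨n, hn1, hn2⟩ := exists_mem_Ioc_zpow (x := 3 * l) (y := (2 : ℝ))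
    (by linarith) (by norm_num)
  set k : ℤ := -n with hk
  set s : ℝ := (2 : ℝ) ^ (-k) with hs'
  have hsn : s = (2 : ℝ) ^ n := by rw [hs', hk, neg_neg]
  have hs : 0 < s := by rw [hs']; positivity
  have hs3 : s < 3 * l := by rw [hsn]; exact hn1
  have hls : l ≤ 2 * s / 3 := by
    have : (2 : ℝ) ^ (n + 1) = 2 * s := by
      rw [hsn, zpow_add₀ (by norm_num : (2:ℝ) ≠ 0)]; ring
    rw [this] at hn2
    linarith
  have hσ : ThreeLattice.sgn k = 1 ∨ ThreeLattice.sgn k = -1 := by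
    unfold ThreeLattice.sgn; by_cases h : Even k <;> simp [h]
  -- choose per coordinate the good grid and position
  have hchoice : ∀ i : Fin d, ∃ (t : Fin 3) (z : ℤ),
      s * ((ThreeLattice.sgn k : ℤ) : ℝ) * ((t : ℕ) : ℝ) / 3 + s * (z : ℝ) ≤ Q.corner i ∧
      Q.corner i + l ≤ s * ((ThreeLattice.sgn k : ℤ) : ℝ) * ((t : ℕ) : ℝ) / 3 + s * (z : ℝ) + s :=
    fun i => ThreeLattice.exists_good s l (Q.corner i) hs hl hls _ hσ
  choose t z hz1 hz2 using hchoice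
  refine ⟨finFunctionFinEquiv t, (ThreeLattice.baseCube t k).translate z, ?_, ?_, ?_⟩
  · refine Set.mem_iUnion.2 ⟨k, ?_⟩
    show (ThreeLattice.baseCube t k).translate z ∈
      {R | ∃ m : Fin d → ℤ, R = (ThreeLattice.baseCube ((finFunctionFinEquiv.symm)
        (finFunctionFinEquiv t)) k).translate m}
    rw [Equiv.symm_apply_apply]
    exact ⟨z, rfl⟩
  · intro y hy i
    have h1 := (hy i).1
    have h2 := (hy i).2
    have hcor : ((ThreeLattice.baseCube t k).translate z).corner i =
        s * ((ThreeLattice.sgn k : ℤ) : ℝ) * ((t i : ℕ) : ℝ) / 3 + s * (z i : ℝ) := by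
      simp only [Cube.translate, ThreeLattice.baseCube, hs']
    have hside : ((ThreeLattice.baseCube t k).translate z).side = s := rfl
    rw [hcor, hside]
    constructor
    · linarith [hz1 i]
    · linarith [hz2 i]
  · have hvol1 : volume ((ThreeLattice.baseCube t k).translate z).toSet =
        ENNReal.ofReal s ^ d := by
      rw [ThreeLattice.volume_toSet]; rfl
    have hvol2 : volume Q.toSet = ENNReal.ofReal l ^ d := by
      rw [ThreeLattice.volume_toSet]
    rw [hvol1, hvol2]
    have h3 : (3 : ℝ≥0∞) ^ d * ENNReal.ofReal l ^ d = (ENNReal.ofReal (3 * l)) ^ d := by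
      rw [ENNReal.ofReal_mul (by norm_num : (0:ℝ) ≤ 3), mul_pow]
      norm_num
    rw [h3]
    exact pow_le_pow_left₀ zero_le (ENNReal.ofReal_le_ofReal hs3.le) d
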